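/- Let M be a matroid with finite ground set E = {1,…,n} and let I_M be its matroid ideal in k[x_1,…,x_n]. Then I_M equals the intersection, over all bases B of M, of the monomial prime ideals generated by {x_i : i ∈ B}. -/

import Mathlib

open Finset

attribute [local instance] Classical.propDecidable

lemma flat_closure' {α : Type*} (M : Matroid α) (X : Set α) : M.IsFlat (M.closure X) := by
  have h : M.closure X = ⋂ (F : {F : Set α // M.IsFlat F ∧ X ∩ M.E ⊆ F}), F.1 := by
    rw [Matroid.closure_def, Set.sInter_eq_iInter]; rfl
  have : Nonempty {F : Set α // M.IsFlat F ∧ X ∩ M.E ⊆ F} :=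
    ⟨⟨M.E, M.ground_isFlat, Set.inter_subset_right⟩⟩
  rw [h]
  exact Matroid.IsFlat.iInter fun F => F.2.1

lemma prod_X_eq_monomial' {σ : Type*} {R : Type*} [CommSemiring R] (T : Finset σ) :
    (∏ i ∈ T, MvPolynomial.X i : MvPolynomial σ R) =
      MvPolynomial.monomial (∑ i ∈ T, Finsupp.single i 1) 1 := by
  classical
  induction T using Finset.induction with
  | empty => simp
  | insert _ _ h ih =>
    rw [Finset.prod_insert h, Finset.sum_insert h, ih, MvPolynomial.X,
      MvPolynomial.monomial_mul, one_mul]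


/-- The matroid ideal of a matroid `M` on ground set `{1,…,n}` (here `Fin n`): the ideal of
`k[x_1,…,x_n]` generated by the monomials `∏_{i ∉ F} x_i` for the proper flats `F` of `M`. -/
noncomputable def matroidIdeal (n : ℕ) (k : Type*) [Field k] (M : Matroid (Fin n)) :
    Ideal (MvPolynomial (Fin n) k) :=
  Ideal.span {m | ∃ F : Set (Fin n), M.IsFlat F ∧ F ≠ Set.univ ∧
    m = ∏ i ∈ Finset.univ.filter (fun i => i ∉ F), MvPolynomial.X i}

/-- the matroid ideal `I_M` equals the intersection, over all bases `B` of `M`, of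
the monomial primes `⟨x_i : i ∈ B⟩`. -/
theorem matroidIdeal_eq_iInf_bases (n : ℕ) (k : Type*) [Field k] (M : Matroid (Fin n))
    (hE : M.E = Set.univ) :
    matroidIdeal n k M =
      ⨅ (B : Set (Fin n)) (_ : M.IsBase B),
        Ideal.span {m | ∃ i ∈ B, m = (MvPolynomial.X i : MvPolynomial (Fin n) k)} := by
  have hset : ∀ B : Set (Fin n),
      {m | ∃ i ∈ B, m = (MvPolynomial.X i : MvPolynomial (Fin n) k)} =
        MvPolynomial.X '' B := by
    intro B; ext m
    simp only [Set.mem_setOf_eq, Set.mem_image]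
    exact ⟨fun ⟨i, hi, h⟩ => ⟨i, hi, h.symm⟩, fun ⟨i, hi, h⟩ => ⟨i, hi, h.symm⟩⟩
  apply le_antisymm
  · rw [matroidIdeal, Ideal.span_le]
    rintro m ⟨F, hF, hFne, rfl⟩
    simp only [SetLike.mem_coe, Ideal.mem_iInf]
    intro B hB
    have hBF : ¬ B ⊆ F := by
      intro hsub
      apply hFne
      apply Set.eq_univ_of_univ_subset
      calc Set.univ = M.E := hE.symm
        _ = M.closure B := hB.closure_eq.symm
        _ ⊆ M.closure F := M.closure_subset_closure hsub
        _ = F := hF.closure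
    obtain ⟨i, hiB, hiF⟩ := Set.not_subset.mp hBF
    have hXi : (MvPolynomial.X i : MvPolynomial (Fin n) k) ∈
        Ideal.span {m | ∃ i ∈ B, m = (MvPolynomial.X i : MvPolynomial (Fin n) k)} :=
      Ideal.subset_span ⟨i, hiB, rfl⟩
    have hmem : i ∈ Finset.univ.filter (fun j => j ∉ F) := by
      simp [hiF]
    rw [← Finset.mul_prod_erase _ _ hmem]
    exact Ideal.mul_mem_right _ _ hXi
  · intro p hp
    simp only [Ideal.mem_iInf] at hp
    rw [← p.support_sum_monomial_coeff]
    apply Ideal.sum_mem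
    intro m hm
    set S : Set (Fin n) := {i | m i ≠ 0} with hS
    set F := M.closure Sᶜ with hFdef
    have hFflat : M.IsFlat F := flat_closure' M Sᶜ
    have hFne : F ≠ Set.univ := by
      intro h
      have hsp : M.Spanning Sᶜ := by
        rw [Matroid.spanning_iff_closure_eq (by rw [hE]; exact Set.subset_univ _)]
        rw [hE]; exact h
      obtain ⟨B, hB, hBS⟩ := hsp.exists_isBase_subset
      have h2 := hp B hB
      rw [hset B, MvPolynomial.mem_ideal_span_X_image] at h2
      obtain ⟨i, hiB, hi⟩ := h2 m hm
      exact (hBS hiB) hi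
    have hsub : Sᶜ ⊆ F := M.subset_closure _ (by rw [hE]; exact Set.subset_univ _)
    set T := Finset.univ.filter (fun i => i ∉ F) with hT
    have hTm : ∀ i ∈ T, 1 ≤ m i := by
      intro i hi
      rw [hT, Finset.mem_filter] at hi
      have : i ∈ S := by
        by_contra hc
        exact hi.2 (hsub hc)
      have hne : m i ≠ 0 := this
      omega
    have hdvd : (∏ i ∈ T, MvPolynomial.X i : MvPolynomial (Fin n) k) ∣
        MvPolynomial.monomial m (MvPolynomial.coeff m p) := by
      rw [prod_X_eq_monomial', MvPolynomial.monomial_dvd_monomial]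
      refine ⟨Or.inr ?_, one_dvd _⟩
      intro j
      rw [Finsupp.finset_sum_apply]
      by_cases hj : j ∈ T
      · rw [Finset.sum_eq_single j (fun b _ hb => Finsupp.single_eq_of_ne' hb)
          (fun h => absurd hj h), Finsupp.single_eq_same]
        exact hTm j hj
      · simp only [Finsupp.single_apply]
        rw [Finset.sum_eq_zero]
        · exact Nat.zero_le _
        intro b hb
        rw [if_neg]
        intro hbj
        exact hj (hbj ▸ hb)
    obtain ⟨q, hq⟩ := hdvd
    rw [hq]
    exact Ideal.mul_mem_right _ _ (Ideal.subset_span ⟨F, hFflat, hFne, rfl⟩)
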